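/- arXiv:2410.12494 — 2 statements merged into one kernel-verified Lean document; each statement's English description precedes it below -/
import Mathlib

section
/- For any finite poset P, point i ∈ P, and finite poset Q, the number of linear extensions e(Q) divides the number of linear extensions e(P ∘_i Q). -/
open scoped Lex

/-- A finite poset is a chain if any two elements are comparable. -/
def IsChainPoset (R : Type*) [PartialOrder R] : Prop := ∀ x y : R, x ≤ y ∨ y ≤ x

/-- Linear extensions of a finite poset `R`: order-preserving bijective labelings
by `{1, …, |R|}` (here modeled by `Fin (card R)`). -/
def LinExt (R : Type*) [PartialOrder R] [Fintype R] :=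
  {f : R ≃ Fin (Fintype.card R) // ∀ x y : R, x < y → f x < f y}

/-- `e(R)`: the number of linear extensions of `R`. -/
noncomputable def numExt (R : Type*) [PartialOrder R] [Fintype R] : ℕ := Nat.card (LinExt R)

/-- The number of linear extensions of `R` placing `x` below `y`. -/
noncomputable def numBelow (R : Type*) [PartialOrder R] [Fintype R] (x y : R) : ℕ :=
  Nat.card {f : LinExt R // f.1 x < f.1 y}

/-- The number of linear extensions of `R` placing `a` below `b` and `c` below `d`. -/
noncomputable def numBelow2 (R : Type*) [PartialOrder R] [Fintype R] (a b c d : R) : ℕ :=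
  Nat.card {f : LinExt R // f.1 a < f.1 b ∧ f.1 c < f.1 d}

/-- `ℙ_R(x < y)`: the fraction of linear extensions of `R` placing `x` below `y`. -/
noncomputable def probBelow (R : Type*) [PartialOrder R] [Fintype R] (x y : R) : ℚ :=
  (numBelow R x y : ℚ) / (numExt R : ℚ)

/-- `δ(R) = max_{x ≠ y} min {ℙ_R(x<y), ℙ_R(y<x)}` (and `0` for chains / small posets). -/
noncomputable def delta (R : Type*) [PartialOrder R] [Fintype R] [DecidableEq R] : ℚ :=
  Finset.univ.fold max 0 (fun xy : R × R =>
    if xy.1 = xy.2 then 0 else min (probBelow R xy.1 xy.2) (probBelow R xy.2 xy.1))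

/-- The lexicographic sum `P ∘_i Q`: the poset obtained from `P` by replacing the
point `i` by the poset `Q`, elements of `Q` inheriting all comparabilities of `i`. -/
def LexAt (P : Type*) (i : P) (Q : Type*) := {p : P // p ≠ i} ⊕ Q

instance LexAt.instPartialOrder (P : Type*) [PartialOrder P] (i : P) (Q : Type*)
    [PartialOrder Q] : PartialOrder (LexAt P i Q) where
  le x y :=
    match x, y with
    | .inl a, .inl b => a.1 ≤ b.1
    | .inl a, .inr _ => a.1 < i
    | .inr _, .inl b => i < b.1
    | .inr q, .inr q' => q ≤ q'
  le_refl x := by cases x <;> exact le_refl _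
  le_trans x y z hxy hyz := by
    cases x <;> cases y <;> cases z <;>
    first
      | exact hxy
      | exact hyz
      | exact le_trans hxy hyz
      | exact lt_of_le_of_lt hxy hyz
      | exact lt_of_lt_of_le hxy hyz
      | exact le_of_lt (lt_trans hxy hyz)
      | exact absurd (lt_trans hxy hyz) (lt_irrefl i)
  le_antisymm x y hxy hyx := by
    cases x <;> cases y <;>
    first
      | exact congrArg Sum.inl (Subtype.ext (le_antisymm hxy hyx))
      | exact congrArg Sum.inr (le_antisymm hxy hyx)
      | exact absurd (lt_trans hxy hyx) (lt_irrefl i)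
      | exact absurd (lt_trans hyx hxy) (lt_irrefl i)

instance LexAt.instFintype (P : Type*) [Fintype P] [DecidableEq P] (i : P) (Q : Type*)
    [Fintype Q] : Fintype (LexAt P i Q) := inferInstanceAs (Fintype ({p : P // p ≠ i} ⊕ Q))

instance LexAt.instDecidableEq (P : Type*) [DecidableEq P] (i : P) (Q : Type*)
    [DecidableEq Q] : DecidableEq (LexAt P i Q) :=
  inferInstanceAs (DecidableEq ({p : P // p ≠ i} ⊕ Q))


section AuxForDvd

/-- Relative-order equivalence for an injective map into a linear order. -/
lemma exists_rel_equiv {Q : Type*} [Fintype Q] {β : Type*} [LinearOrder β]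
    (f : Q → β) (hf : Function.Injective f) :
    ∃ g : Q ≃ Fin (Fintype.card Q), ∀ q q' : Q, g q < g q' ↔ f q < f q' := by
  letI L : LinearOrder Q := LinearOrder.lift' f hf
  have hle : ∀ q q' : Q, q ≤ q' ↔ f q ≤ f q' := fun q q' => Iff.rfl
  have hlt : ∀ q q' : Q, q < q' ↔ f q < f q' := by
    intro q q'
    rw [lt_iff_le_not_ge, lt_iff_le_not_ge, hle, hle]
  refine ⟨(monoEquivOfFin Q rfl).symm.toEquiv, fun q q' => ?_⟩
  rw [← hlt]
  exact (monoEquivOfFin Q rfl).symm.lt_iff_lt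

/-- Two equivs into `Fin n` inducing the same order comparisons are equal. -/
lemma rel_equiv_unique {Q : Type*} {n : ℕ} (g g' : Q ≃ Fin n)
    (h : ∀ q q' : Q, g q < g q' ↔ g' q < g' q') : g = g' := by
  have hsm : StrictMono (fun x : Fin n => g' (g.symm x)) := by
    intro a b hab
    exact (h _ _).mp (by simpa using hab)
  have hid : StrictMono (id : Fin n → Fin n) := strictMono_id
  have hr : Set.range (fun x : Fin n => g' (g.symm x)) = Set.range (id : Fin n → Fin n) := by
    simp only [Set.range_id]
    exact Set.range_eq_univ.mpr fun b => ⟨g (g'.symm b), by simp⟩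
  letI : WellFoundedLT (Fin n) := inferInstance
  have := (StrictMono.range_inj (β := Fin n) (γ := Fin n) hsm hid).mp hr
  apply Equiv.ext; intro q
  have := congrFun this (g q)
  simpa using this.symm

variable {P Q : Type} [PartialOrder P] [PartialOrder Q] {i : P}

lemma LexAt.inr_lt_inr {q q' : Q} :
    @LT.lt (LexAt P i Q) Preorder.toLT (Sum.inr q) (Sum.inr q') ↔ q < q' := by
  exact (lt_iff_le_not_ge (α := LexAt P i Q)).trans (lt_iff_le_not_ge (a := q) (b := q')).symm

lemma LexAt.inl_lt_inr {a : {p : P // p ≠ i}} {q : Q} :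
    @LT.lt (LexAt P i Q) Preorder.toLT (Sum.inl a) (Sum.inr q) ↔ a.1 < i := by
  refine (lt_iff_le_not_ge (α := LexAt P i Q)).trans ?_
  constructor
  · rintro ⟨h1, _⟩; exact h1
  · intro h; exact ⟨h, fun h2 => lt_asymm h h2⟩

lemma LexAt.inr_lt_inl {b : {p : P // p ≠ i}} {q : Q} :
    @LT.lt (LexAt P i Q) Preorder.toLT (Sum.inr q) (Sum.inl b) ↔ i < b.1 := by
  refine (lt_iff_le_not_ge (α := LexAt P i Q)).trans ?_
  constructor
  · rintro ⟨h1, _⟩; exact h1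
  · intro h; exact ⟨h, fun h2 => lt_asymm h h2⟩

end AuxForDvd

/-- Twist a bijective labeling of `LexAt` by a permutation of `Q`. -/
def LexAt.twist {P Q : Type} [PartialOrder P] [Fintype P] [DecidableEq P] [PartialOrder Q]
    [Fintype Q] {i : P} (f : LexAt P i Q ≃ Fin (Fintype.card (LexAt P i Q))) (e : Q ≃ Q) :
    LexAt P i Q ≃ Fin (Fintype.card (LexAt P i Q)) :=
  (Equiv.sumCongr (Equiv.refl _) e).trans f

lemma LexAt.twist_inl {P Q : Type} [PartialOrder P] [Fintype P] [DecidableEq P] [PartialOrder Q]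
    [Fintype Q] {i : P} (f : LexAt P i Q ≃ Fin (Fintype.card (LexAt P i Q))) (e : Q ≃ Q)
    (a : {p : P // p ≠ i}) : LexAt.twist f e (Sum.inl a) = f (Sum.inl a) := rfl

lemma LexAt.twist_inr {P Q : Type} [PartialOrder P] [Fintype P] [DecidableEq P] [PartialOrder Q]
    [Fintype Q] {i : P} (f : LexAt P i Q ≃ Fin (Fintype.card (LexAt P i Q))) (e : Q ≃ Q)
    (q : Q) : LexAt.twist f e (Sum.inr q) = f (Sum.inr (e q)) := rfl

/-- Twisting a linear extension of `LexAt P i Q` with relative `Q`-order `g` so that the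
relative order becomes `g'` yields a linear extension with relative order `g'`. -/
lemma LexAt.twist_mem {P Q : Type} [PartialOrder P] [Fintype P] [DecidableEq P] [PartialOrder Q]
    [Fintype Q] {i : P} (f : LinExt (LexAt P i Q)) (g g' : LinExt Q)
    (hg : ∀ q q' : Q, g.1 q < g.1 q' ↔ f.1 (Sum.inr q) < f.1 (Sum.inr q')) :
    (∀ x y : LexAt P i Q, x < y →
        LexAt.twist f.1 (g'.1.trans g.1.symm) x < LexAt.twist f.1 (g'.1.trans g.1.symm) y) ∧
    (∀ q q' : Q, g'.1 q < g'.1 q' ↔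
        LexAt.twist f.1 (g'.1.trans g.1.symm) (Sum.inr q) <
          LexAt.twist f.1 (g'.1.trans g.1.symm) (Sum.inr q')) := by
  set e : Q ≃ Q := g'.1.trans g.1.symm with he
  have hrel : ∀ q q' : Q, g'.1 q < g'.1 q' ↔
      LexAt.twist f.1 e (Sum.inr q) < LexAt.twist f.1 e (Sum.inr q') := by
    intro q q'
    rw [LexAt.twist_inr, LexAt.twist_inr, ← hg]
    simp [he]
  refine ⟨?_, hrel⟩
  rintro (a | q) (b | q') hxy
  · exact f.2 _ _ hxy
  · rw [LexAt.twist_inl, LexAt.twist_inr]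
    exact f.2 _ _ (LexAt.inl_lt_inr.mpr (LexAt.inl_lt_inr.mp hxy))
  · rw [LexAt.twist_inr, LexAt.twist_inl]
    exact f.2 _ _ (LexAt.inr_lt_inl.mpr (LexAt.inr_lt_inl.mp hxy))
  · exact (hrel q q').mp (g'.2 _ _ (LexAt.inr_lt_inr.mp hxy))

/-- `e(Q)` divides `e(P ∘_i Q)`. -/
theorem numExt_dvd_numExt_lexAt (P Q : Type) [PartialOrder P] [Fintype P] [DecidableEq P]
    [PartialOrder Q] [Fintype Q] (i : P) :
    numExt Q ∣ numExt (LexAt P i Q) := by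
  classical
  have rel : ∀ f : LinExt (LexAt P i Q), ∃ g : LinExt Q,
      ∀ q q' : Q, g.1 q < g.1 q' ↔ f.1 (Sum.inr q) < f.1 (Sum.inr q') := by
    intro f
    obtain ⟨g, hg⟩ := exists_rel_equiv (fun q : Q => f.1 (Sum.inr q))
      (fun q q' h => Sum.inr_injective (f.1.injective h))
    exact ⟨⟨g, fun q q' h => (hg q q').mpr (f.2 _ _ (LexAt.inr_lt_inr.mpr h))⟩, hg⟩
  by_cases hne : Nonempty (LinExt Q)
  · obtain ⟨g₀⟩ := hne
    let Fib := {h : LinExt (LexAt P i Q) //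
      ∀ q q' : Q, g₀.1 q < g₀.1 q' ↔ h.1 (Sum.inr q) < h.1 (Sum.inr q')}
    let Φ : LinExt Q × Fib → LinExt (LexAt P i Q) := fun gh =>
      ⟨LexAt.twist gh.2.1.1 (gh.1.1.trans g₀.1.symm),
        (LexAt.twist_mem gh.2.1 g₀ gh.1 gh.2.2).1⟩
    have hΦrel : ∀ gh : LinExt Q × Fib, ∀ q q' : Q,
        gh.1.1 q < gh.1.1 q' ↔ (Φ gh).1 (Sum.inr q) < (Φ gh).1 (Sum.inr q') :=
      fun gh => (LexAt.twist_mem gh.2.1 g₀ gh.1 gh.2.2).2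
    have hbij : Function.Bijective Φ := by
      constructor
      · rintro ⟨g, h⟩ ⟨g', h'⟩ heq
        have hgg' : g = g' := by
          apply Subtype.ext
          apply rel_equiv_unique
          intro q q'
          rw [hΦrel ⟨g, h⟩ q q', hΦrel ⟨g', h'⟩ q q', heq]
        subst hgg'
        have hund : LexAt.twist h.1.1 (g.1.trans g₀.1.symm) =
            LexAt.twist h'.1.1 (g.1.trans g₀.1.symm) := congrArg Subtype.val heq
        have huv : h.1.1 = h'.1.1 := by
          have h2 := congrArg (fun F : LexAt P i Q ≃ Fin (Fintype.card (LexAt P i Q)) =>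
            (Equiv.sumCongr (Equiv.refl {p : P // p ≠ i}) (g.1.trans g₀.1.symm)).symm.trans F) hund
          apply Equiv.ext; intro x
          have h3 := Equiv.congr_fun hund
            ((Equiv.sumCongr (Equiv.refl {p : P // p ≠ i}) (g.1.trans g₀.1.symm)).symm x)
          have h4 := (Equiv.sumCongr (Equiv.refl {p : P // p ≠ i}) (g.1.trans g₀.1.symm)).apply_symm_apply x
          exact (congrArg h.1.1 h4.symm).trans (h3.trans (congrArg h'.1.1 h4))
        exact Prod.ext rfl (Subtype.ext (Subtype.ext huv))
      · intro F
        obtain ⟨g, hg⟩ := rel F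
        refine ⟨⟨g, ⟨⟨LexAt.twist F.1 (g₀.1.trans g.1.symm),
          (LexAt.twist_mem F g g₀ hg).1⟩, (LexAt.twist_mem F g g₀ hg).2⟩⟩, ?_⟩
        apply Subtype.ext
        apply Equiv.ext
        rintro (a | q)
        · rfl
        · show F.1 (Sum.inr (g.1.symm (g₀.1 (g₀.1.symm (g.1 q))))) = F.1 (Sum.inr q)
          simp
    have key : Nat.card (LinExt Q × Fib) = Nat.card (LinExt (LexAt P i Q)) :=
      Nat.card_eq_of_bijective Φ hbij
    rw [Nat.card_prod] at key
    refine ⟨Nat.card Fib, ?_⟩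
    show Nat.card (LinExt (LexAt P i Q)) = Nat.card (LinExt Q) * Nat.card Fib
    exact key.symm
  · have hE : IsEmpty (LinExt (LexAt P i Q)) := ⟨fun f => hne ⟨(rel f).choose⟩⟩
    have h0 : numExt (LexAt P i Q) = 0 := by
      simp [numExt, Nat.card_of_isEmpty]
    rw [h0]
    exact dvd_zero _
end

section
/- For finite posets P and Q that are not both empty, δ(P ⊔ Q) ≥ max{δ(P), δ(Q)}, where P ⊔ Q is the disjoint (parallel) union of P and Q. -/
open scoped Lex

/-! ### Auxiliary machinery -/

section Basic
variable (R : Type*) [PartialOrder R] [Fintype R]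

instance LinExt.instFinite : Finite (LinExt R) := by unfold LinExt; exact Subtype.finite

lemma linExt_nonempty : Nonempty (LinExt R) := by
  classical
  letI : Fintype (LinearExtension R) := ‹Fintype R›
  let e : Fin (Fintype.card R) ≃o LinearExtension R := monoEquivOfFin (LinearExtension R) rfl
  refine ⟨⟨e.symm.toEquiv, fun x y hxy => ?_⟩⟩
  refine e.symm.strictMono (lt_of_le_of_ne (toLinearExtension.monotone hxy.le) ?_)
  exact fun hc => hxy.ne hc

lemma numExt_pos : 0 < numExt R := by
  haveI := linExt_nonempty R
  exact Nat.card_pos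

end Basic

section Congr
variable {R S : Type*} [PartialOrder R] [Fintype R] [PartialOrder S] [Fintype S]

/-- Transfer of linear extensions along an order isomorphism. -/
noncomputable def linExtCongr (e : R ≃o S) : LinExt R ≃ LinExt S where
  toFun f := ⟨e.symm.toEquiv.trans (f.1.trans (finCongr (Fintype.card_congr e.toEquiv))),
    fun x y hxy => by
      simp only [Equiv.trans_apply, finCongr_apply, Fin.lt_def, Fin.coe_cast]
      exact f.2 _ _ (e.symm.strictMono hxy)⟩
  invFun g := ⟨e.toEquiv.trans (g.1.trans (finCongr (Fintype.card_congr e.toEquiv).symm)),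
    fun x y hxy => by
      simp only [Equiv.trans_apply, finCongr_apply, Fin.lt_def, Fin.coe_cast]
      exact g.2 _ _ (e.strictMono hxy)⟩
  left_inv f := Subtype.ext (Equiv.ext fun x => by simp)
  right_inv g := Subtype.ext (Equiv.ext fun x => by simp)

lemma linExtCongr_lt_iff (e : R ≃o S) (f : LinExt R) (x y : R) :
    (linExtCongr e f).1 (e x) < (linExtCongr e f).1 (e y) ↔ f.1 x < f.1 y := by
  have hx : e.symm.toEquiv (e x) = x := e.symm_apply_apply x
  have hy : e.symm.toEquiv (e y) = y := e.symm_apply_apply y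
  change (finCongr (Fintype.card_congr e.toEquiv) (f.1 (e.symm.toEquiv (e x)))) <
    finCongr (Fintype.card_congr e.toEquiv) (f.1 (e.symm.toEquiv (e y))) ↔ _
  rw [hx, hy]
  simp only [linExtCongr, Equiv.coe_fn_mk, Equiv.trans_apply, hx, hy, finCongr_apply,
    Fin.lt_def, Fin.coe_cast]

lemma numExt_congr (e : R ≃o S) : numExt R = numExt S := Nat.card_congr (linExtCongr e)

lemma numBelow_congr (e : R ≃o S) (x y : R) : numBelow R x y = numBelow S (e x) (e y) :=
  Nat.card_congr (Equiv.subtypeEquiv (linExtCongr e) fun f => (linExtCongr_lt_iff e f x y).symm)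

lemma probBelow_congr (e : R ≃o S) (x y : R) : probBelow R x y = probBelow S (e x) (e y) := by
  rw [probBelow, probBelow, numExt_congr e, numBelow_congr e]

end Congr

section SumKey
variable (P Q : Type*) [PartialOrder P] [Fintype P] [PartialOrder Q] [Fintype Q]

/-- Shuffles: subsets of `Fin |P ⊕ Q|` of size `|P|`. -/
abbrev Sh := {S : Finset (Fin (Fintype.card (P ⊕ Q))) // S.card = Fintype.card P}

lemma sh_compl_card (S : Sh P Q) : (S.1ᶜ).card = Fintype.card Q := by
  rw [Finset.card_compl, S.2, Fintype.card_fin, Fintype.card_sum]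
  omega

def theta (t : Sh P Q × LinExt P × LinExt Q) : (P ⊕ Q) → Fin (Fintype.card (P ⊕ Q)) :=
  Sum.elim (fun p => (t.1.1.orderEmbOfFin t.1.2) (t.2.1.1 p))
           (fun q => ((t.1.1ᶜ).orderEmbOfFin (sh_compl_card P Q t.1)) (t.2.2.1 q))

lemma theta_injective (t : Sh P Q × LinExt P × LinExt Q) : Function.Injective (theta P Q t) := by
  have hmemP : ∀ p, theta P Q t (Sum.inl p) ∈ t.1.1 := fun p => Finset.orderEmbOfFin_mem _ _ _
  have hmemQ : ∀ q, theta P Q t (Sum.inr q) ∈ t.1.1ᶜ := fun q => Finset.orderEmbOfFin_mem _ _ _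
  rintro (a | a) (b | b) h
  · exact congrArg Sum.inl (t.2.1.1.injective ((t.1.1.orderEmbOfFin t.1.2).injective h))
  · exact absurd (h ▸ hmemP a) (Finset.mem_compl.1 (hmemQ b))
  · exact absurd (h ▸ hmemQ a) fun hc => (Finset.mem_compl.1 hc) (hmemP b)
  · exact congrArg Sum.inr (t.2.2.1.injective ((t.1.1ᶜ.orderEmbOfFin _).injective h))

/-- Reassembling a linear extension of `P ⊕ Q` from a shuffle and extensions of `P`, `Q`. -/
noncomputable def Theta (t : Sh P Q × LinExt P × LinExt Q) : LinExt (P ⊕ Q) := by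
  refine ⟨Equiv.ofBijective (theta P Q t)
    ((Fintype.bijective_iff_injective_and_card _).2 ⟨theta_injective P Q t, by simp⟩), ?_⟩
  rintro (a | a) (b | b) hab
  · exact (t.1.1.orderEmbOfFin t.1.2).lt_iff_lt.2 (t.2.1.2 a b (Sum.inl_lt_inl_iff.1 hab))
  · exact absurd hab Sum.not_inl_lt_inr
  · exact absurd hab Sum.not_inr_lt_inl
  · exact (t.1.1ᶜ.orderEmbOfFin (sh_compl_card P Q t.1)).lt_iff_lt.2
      (t.2.2.2 a b (Sum.inr_lt_inr_iff.1 hab))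

lemma mem_iff_aux {α : Type*} {k N : ℕ}
    (T : Finset (Fin N)) (hT : T.card = k) (g : α ≃ Fin k) (v : Fin N) :
    v ∈ T ↔ ∃ p, T.orderEmbOfFin hT (g p) = v := by
  constructor
  · intro hv
    have : v ∈ Set.range (T.orderEmbOfFin hT) := by
      rw [Finset.range_orderEmbOfFin]; exact hv
    obtain ⟨i, hi⟩ := this
    exact ⟨g.symm i, by rw [Equiv.apply_symm_apply]; exact hi⟩
  · rintro ⟨p, rfl⟩
    exact Finset.orderEmbOfFin_mem _ _ _

lemma Theta_injective : Function.Injective (Theta P Q) := by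
  rintro ⟨⟨S, hS⟩, gP, gQ⟩ ⟨⟨S', hS'⟩, gP', gQ'⟩ h
  have hfun : ∀ z, theta P Q (⟨S, hS⟩, gP, gQ) z = theta P Q (⟨S', hS'⟩, gP', gQ') z :=
    fun z => congrArg (fun (F : LinExt (P ⊕ Q)) => F.1 z) h
  have hSS' : S = S' := by
    ext v
    rw [mem_iff_aux S hS gP.1, mem_iff_aux S' hS' gP'.1]
    exact exists_congr fun p => by rw [show (S.orderEmbOfFin hS) (gP.1 p) =
      (S'.orderEmbOfFin hS') (gP'.1 p) from hfun (Sum.inl p)]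
  subst hSS'
  have hgP : gP = gP' := Subtype.ext (Equiv.ext fun p =>
    (S.orderEmbOfFin hS).injective (hfun (Sum.inl p)))
  have hgQ : gQ = gQ' := Subtype.ext (Equiv.ext fun q =>
    (Sᶜ.orderEmbOfFin (sh_compl_card P Q ⟨S, hS⟩)).injective (hfun (Sum.inr q)))
  simp [Prod.ext_iff, Subtype.ext_iff, hgP, hgQ]

lemma Theta_surjective : Function.Surjective (Theta P Q) := by
  classical
  intro F
  set f := F.1 with hf
  have hinj : Function.Injective (fun p : P => f (Sum.inl p)) :=
    fun a b h => Sum.inl_injective (f.injective h)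
  set S : Finset (Fin (Fintype.card (P ⊕ Q))) :=
    Finset.univ.image (fun p : P => f (Sum.inl p)) with hSdef
  have hS : S.card = Fintype.card P := by
    rw [hSdef, Finset.card_image_of_injective _ hinj, Finset.card_univ]
  have hmemS : ∀ p, f (Sum.inl p) ∈ S := fun p => Finset.mem_image_of_mem _ (Finset.mem_univ p)
  have hmemSc : ∀ q, f (Sum.inr q) ∈ Sᶜ := by
    intro q
    rw [Finset.mem_compl, hSdef]
    intro hq
    obtain ⟨p, -, hp⟩ := Finset.mem_image.1 hq
    exact Sum.inl_ne_inr (f.injective hp)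
  have hSc : Sᶜ.card = Fintype.card Q := sh_compl_card P Q ⟨S, hS⟩
  set gPfun : P → Fin (Fintype.card P) :=
    fun p => (S.orderIsoOfFin hS).symm ⟨f (Sum.inl p), hmemS p⟩ with hgPdef
  have hgP : ∀ p, S.orderEmbOfFin hS (gPfun p) = f (Sum.inl p) := fun p => by
    rw [hgPdef, ← Finset.coe_orderIsoOfFin_apply, OrderIso.apply_symm_apply]
  have hgPinj : Function.Injective gPfun := fun a b hab => by
    have := congrArg (S.orderEmbOfFin hS) hab
    rw [hgP, hgP] at this
    exact Sum.inl_injective (f.injective this)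
  set gQfun : Q → Fin (Fintype.card Q) :=
    fun q => (Sᶜ.orderIsoOfFin hSc).symm ⟨f (Sum.inr q), hmemSc q⟩ with hgQdef
  have hgQ : ∀ q, Sᶜ.orderEmbOfFin hSc (gQfun q) = f (Sum.inr q) := fun q => by
    rw [hgQdef, ← Finset.coe_orderIsoOfFin_apply, OrderIso.apply_symm_apply]
  have hgQinj : Function.Injective gQfun := fun a b hab => by
    have := congrArg (Sᶜ.orderEmbOfFin hSc) hab
    rw [hgQ, hgQ] at this
    exact Sum.inr_injective (f.injective this)
  refine ⟨(⟨S, hS⟩,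
    ⟨Equiv.ofBijective gPfun ((Fintype.bijective_iff_injective_and_card _).2
      ⟨hgPinj, by simp⟩), fun a b hab => ?_⟩,
    ⟨Equiv.ofBijective gQfun ((Fintype.bijective_iff_injective_and_card _).2
      ⟨hgQinj, by simp⟩), fun a b hab => ?_⟩), ?_⟩
  · refine (S.orderEmbOfFin hS).lt_iff_lt.1 ?_
    show S.orderEmbOfFin hS (gPfun a) < S.orderEmbOfFin hS (gPfun b)
    rw [hgP, hgP]
    exact F.2 _ _ (Sum.inl_lt_inl_iff.2 hab)
  · refine (Sᶜ.orderEmbOfFin hSc).lt_iff_lt.1 ?_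
    show Sᶜ.orderEmbOfFin hSc (gQfun a) < Sᶜ.orderEmbOfFin hSc (gQfun b)
    rw [hgQ, hgQ]
    exact F.2 _ _ (Sum.inr_lt_inr_iff.2 hab)
  · refine Subtype.ext (Equiv.ext fun z => ?_)
    rcases z with p | q
    · exact hgP p
    · exact hgQ q

/-- The shuffle decomposition of linear extensions of a disjoint union. -/
noncomputable def ThetaE : Sh P Q × LinExt P × LinExt Q ≃ LinExt (P ⊕ Q) :=
  Equiv.ofBijective (Theta P Q) ⟨Theta_injective P Q, Theta_surjective P Q⟩

lemma ThetaE_lt_iff (t : Sh P Q × LinExt P × LinExt Q) (x y : P) :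
    (ThetaE P Q t).1 (Sum.inl x) < (ThetaE P Q t).1 (Sum.inl y) ↔ t.2.1.1 x < t.2.1.1 y :=
  (t.1.1.orderEmbOfFin t.1.2).lt_iff_lt

lemma probBelow_sum_inl (x y : P) :
    probBelow (P ⊕ Q) (Sum.inl x) (Sum.inl y) = probBelow P x y := by
  classical
  have hShpos : 0 < Nat.card (Sh P Q) := by
    have : Nonempty (Sh P Q) := by
      obtain ⟨T, -, hT⟩ := Finset.exists_subset_card_eq
        (s := (Finset.univ : Finset (Fin (Fintype.card (P ⊕ Q))))) (n := Fintype.card P)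
        (by simp [Fintype.card_sum])
      exact ⟨⟨T, hT⟩⟩
    exact Nat.card_pos
  have hext : numExt (P ⊕ Q) = Nat.card (Sh P Q) * (numExt P * numExt Q) := by
    rw [numExt, ← Nat.card_congr (ThetaE P Q), Nat.card_prod, Nat.card_prod, numExt, numExt]
  have hbel : numBelow (P ⊕ Q) (Sum.inl x) (Sum.inl y) =
      Nat.card (Sh P Q) * (numBelow P x y * numExt Q) := by
    rw [numBelow]
    rw [← Nat.card_congr (Equiv.subtypeEquiv (ThetaE P Q) (fun t =>
      (ThetaE_lt_iff P Q t x y).symm))]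
    have e2 : {t : Sh P Q × LinExt P × LinExt Q // t.2.1.1 x < t.2.1.1 y} ≃
        Sh P Q × {g : LinExt P // g.1 x < g.1 y} × LinExt Q :=
      { toFun := fun t => (t.1.1, ⟨t.1.2.1, t.2⟩, t.1.2.2)
        invFun := fun t => ⟨(t.1, t.2.1.1, t.2.2), t.2.1.2⟩
        left_inv := fun t => rfl
        right_inv := fun t => rfl }
    rw [Nat.card_congr e2, Nat.card_prod, Nat.card_prod, numBelow, numExt]
  rw [probBelow, probBelow, hext, hbel]
  push_cast
  rw [mul_div_mul_left _ _ (by exact_mod_cast hShpos.ne')]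
  rw [mul_div_mul_right _ _ (by exact_mod_cast (numExt_pos Q).ne')]

lemma probBelow_sum_inr (x y : Q) :
    probBelow (P ⊕ Q) (Sum.inr x) (Sum.inr y) = probBelow Q x y := by
  have h := probBelow_congr (OrderIso.sumComm Q P) (Sum.inl x) (Sum.inl y)
  have hx : (OrderIso.sumComm Q P) (Sum.inl x) = Sum.inr x := rfl
  have hy : (OrderIso.sumComm Q P) (Sum.inl y) = Sum.inr y := rfl
  rw [hx, hy] at h
  rw [← h, probBelow_sum_inl]

end SumKey

section DeltaLemmas

lemma delta_nonneg (R : Type*) [PartialOrder R] [Fintype R] [DecidableEq R] : 0 ≤ delta R :=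
  (Finset.le_fold_max _).2 (Or.inl le_rfl)

lemma min_prob_le_delta (R : Type*) [PartialOrder R] [Fintype R] [DecidableEq R]
    {a b : R} (hab : a ≠ b) :
    min (probBelow R a b) (probBelow R b a) ≤ delta R :=
  (Finset.le_fold_max _).2 (Or.inr ⟨(a, b), Finset.mem_univ _, by simp [hab]⟩)

end DeltaLemmas

/-- for the disjoint (parallel) union, `δ(P ⊔ Q) ≥ max {δ(P), δ(Q)}`,
provided `P` and `Q` are not both empty. -/
theorem delta_disjointUnion_ge (P Q : Type) [PartialOrder P] [Fintype P] [DecidableEq P]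
    [PartialOrder Q] [Fintype Q] [DecidableEq Q] (h : Nonempty P ∨ Nonempty Q) :
    max (delta P) (delta Q) ≤ delta (P ⊕ Q) := by
  classical
  refine max_le ?_ ?_
  · rw [delta, Finset.fold_max_le]
    refine ⟨delta_nonneg _, fun t _ => ?_⟩
    by_cases hab : t.1 = t.2
    · simpa [hab] using delta_nonneg (P ⊕ Q)
    · rw [if_neg hab, ← probBelow_sum_inl P Q t.1 t.2, ← probBelow_sum_inl P Q t.2 t.1]
      exact min_prob_le_delta _ (fun hc => hab (Sum.inl_injective hc))
  · rw [delta, Finset.fold_max_le]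
    refine ⟨delta_nonneg _, fun t _ => ?_⟩
    by_cases hab : t.1 = t.2
    · simpa [hab] using delta_nonneg (P ⊕ Q)
    · rw [if_neg hab, ← probBelow_sum_inr P Q t.1 t.2, ← probBelow_sum_inr P Q t.2 t.1]
      exact min_prob_le_delta _ (fun hc => hab (Sum.inr_injective hc))
end
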